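/- For exchangeable residuals $e_1,\dots,e_{n+1}$ and the order-statistic threshold $\hat q$ equal to the $k$-th smallest of $e_1,\dots,e_n$, the miscoverage satisfies $\mathbb{P}[e_{n+1} > \hat q] \le \frac{n+1-k}{n+1}$. -/

import Mathlib

open MeasureTheory ProbabilityTheory
open scoped ENNReal

/-- The `k`-th smallest element of a list of reals (1-indexed). -/
noncomputable def orderStat (l : List ℝ) (k : ℕ) : ℝ :=
  (l.insertionSort (· ≤ ·)).getD (k - 1) 0

/-- A finite family of real random variables is exchangeable if its joint law
is invariant under permutations of the indices. -/
def Exchangeable {Ω : Type*} [MeasureSpace Ω] {m : ℕ} (e : Fin m → Ω → ℝ) : Prop :=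
  ∀ σ : Equiv.Perm (Fin m),
    Measure.map (fun ω => fun i => e (σ i) ω) (ℙ : Measure Ω) =
      Measure.map (fun ω => fun i => e i ω) (ℙ : Measure Ω)

theorem countP_ofFn' {m : ℕ} (f : Fin m → ℝ) (p : ℝ → Prop) [DecidablePred p] :
    (List.ofFn f).countP (fun a => decide (p a)) = (Finset.univ.filter (fun i => p (f i))).card := by
  induction m with
  | zero => simp
  | succ m ih =>
    rw [List.ofFn_succ, List.countP_cons, Finset.card_filter, Fin.sum_univ_succ,
      ← Finset.card_filter, ← ih (fun i => f i.succ)]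
    by_cases h : p (f 0) <;> simp [h] <;> omega

theorem orderStat_lt_iff (l : List ℝ) (k : ℕ) (hk1 : 1 ≤ k) (hkn : k ≤ l.length) (x : ℝ) :
    orderStat l k < x ↔ k ≤ l.countP (fun a => decide (a < x)) := by
  set s := l.insertionSort (· ≤ ·) with hs
  have hperm : s.Perm l := List.perm_insertionSort _ l
  have hlen : s.length = l.length := hperm.length_eq
  have hsorted : s.Pairwise (· ≤ ·) := List.pairwise_insertionSort _ l
  have hcount : l.countP (fun a => decide (a < x)) = s.countP (fun a => decide (a < x)) :=
    (hperm.countP_eq _).symm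
  have hklt : k - 1 < s.length := by omega
  have hget : orderStat l k = s.get ⟨k - 1, hklt⟩ := by
    rw [orderStat, ← hs, List.getD_eq_getElem _ _ hklt]; rfl
  rw [hcount, hget]
  have hmono : ∀ i j : ℕ, ∀ hi : i < s.length, ∀ hj : j < s.length, i ≤ j → s[i] ≤ s[j] := by
    intro i j hi hj hij
    rcases eq_or_lt_of_le hij with h | h
    · subst h; rfl
    · exact List.pairwise_iff_getElem.1 hsorted i j hi hj h
  constructor
  · intro h
    have hsplit : s.countP (fun a => decide (a < x)) =
        (s.take k).countP (fun a => decide (a < x)) + (s.drop k).countP (fun a => decide (a < x)) := by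
      rw [← List.countP_append, List.take_append_drop]
    have : (s.take k).countP (fun a => decide (a < x)) = (s.take k).length := by
      rw [List.countP_eq_length]
      intro a ha
      rw [List.mem_iff_getElem] at ha
      obtain ⟨i, hi, rfl⟩ := ha
      have hi' : i < s.length := by
        have := hi; rw [List.length_take] at this; omega
      rw [List.getElem_take]
      simp only [decide_eq_true_eq]
      have hik : i ≤ k - 1 := by
        have := hi; rw [List.length_take] at this; omega
      exact lt_of_le_of_lt (hmono i (k-1) hi' hklt hik) h
    have hlen' : (s.take k).length = k := by rw [List.length_take]; omega
    omega
  · intro h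
    by_contra hcon
    push_neg at hcon
    have hsplit : s.countP (fun a => decide (a < x)) =
        (s.take (k-1)).countP (fun a => decide (a < x)) + (s.drop (k-1)).countP (fun a => decide (a < x)) := by
      rw [← List.countP_append, List.take_append_drop]
    have h1 : (s.take (k-1)).countP (fun a => decide (a < x)) ≤ k - 1 := by
      calc _ ≤ (s.take (k-1)).length := List.countP_le_length
        _ ≤ k - 1 := by rw [List.length_take]; omega
    have h2 : (s.drop (k-1)).countP (fun a => decide (a < x)) = 0 := by
      rw [List.countP_eq_zero]
      intro a ha
      rw [List.mem_iff_getElem] at ha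
      obtain ⟨i, hi, rfl⟩ := ha
      rw [List.getElem_drop]
      simp only [decide_eq_true_eq, not_lt]
      have hi' : k - 1 + i < s.length := by
        have := hi; rw [List.length_drop] at this; omega
      exact le_trans hcon (hmono (k-1) (k-1+i) hklt hi' (by omega))
    omega

theorem card_rank_ge {m k : ℕ} (x : Fin m → ℝ) :
    (Finset.univ.filter
      (fun j => k ≤ (Finset.univ.filter (fun i => x i < x j)).card)).card ≤ m - k := by
  set S := Finset.univ.filter
      (fun j => k ≤ (Finset.univ.filter (fun i => x i < x j)).card) with hS
  rcases S.eq_empty_or_nonempty with h | h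
  · simp [h]
  · obtain ⟨j₀, hj₀, hmin⟩ := S.exists_min_image x h
    set T := Finset.univ.filter (fun i => x i < x j₀) with hT
    have hkT : k ≤ T.card := by
      rw [hS, Finset.mem_filter] at hj₀; exact hj₀.2
    have hdisj : Disjoint T S := by
      rw [Finset.disjoint_left]
      intro i hiT hiS
      rw [hT, Finset.mem_filter] at hiT
      exact absurd hiT.2 (not_lt.2 (hmin i hiS))
    have : T.card + S.card ≤ m := by
      have := Finset.card_union_of_disjoint hdisj
      have hle : (T ∪ S).card ≤ (Finset.univ : Finset (Fin m)).card :=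
        Finset.card_le_card (Finset.subset_univ _)
      simp [Finset.card_univ] at hle
      omega
    omega

/-- reindexing cardinality lemma -/
theorem card_filter_swap {n : ℕ} (j : Fin (n + 1)) (P : Fin (n + 1) → Prop) [DecidablePred P]
    (hPj : ¬ P j) :
    (Finset.univ.filter (fun i : Fin n =>
        P (Equiv.swap (Fin.last n) j i.castSucc))).card =
      (Finset.univ.filter P).card := by
  apply Finset.card_bij (fun i _ => Equiv.swap (Fin.last n) j i.castSucc)
  · intro a ha
    rw [Finset.mem_filter] at ha ⊢
    exact ⟨Finset.mem_univ _, ha.2⟩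
  · intro a _ b _ hab
    exact Fin.castSucc_injective n ((Equiv.swap (Fin.last n) j).injective hab)
  · intro b hb
    rw [Finset.mem_filter] at hb
    have hbj : b ≠ j := fun h => hPj (h ▸ hb.2)
    have hσb : Equiv.swap (Fin.last n) j b ≠ Fin.last n := by
      intro h
      have : b = Equiv.swap (Fin.last n) j (Fin.last n) := by
        have := congrArg (Equiv.swap (Fin.last n) j) h
        simpa using this
      rw [Equiv.swap_apply_left] at this
      exact hbj this
    obtain ⟨i, hi⟩ := Fin.exists_castSucc_eq.2 hσb
    refine ⟨i, Finset.mem_filter.2 ⟨Finset.mem_univ _, ?_⟩, ?_⟩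
    · rw [hi]; simpa using hb.2
    · rw [hi]; simp

/-- General form of the conformal bound: for exchangeable residuals
`e 0, …, e n` and `q̂` the `k`-th smallest of the first `n` of them, the
miscoverage probability is at most `(n + 1 - k)/(n + 1)`. -/
theorem conformal_miscoverage_bound
    {Ω : Type*} [MeasureSpace Ω] [IsProbabilityMeasure (ℙ : Measure Ω)]
    {n : ℕ}
    (e : Fin (n + 1) → Ω → ℝ) (hmeas : ∀ i, Measurable (e i))
    (hexch : Exchangeable e)
    (k : ℕ) (hk1 : 1 ≤ k) (hkn : k ≤ n)
    (qhat : Ω → ℝ)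
    (hq : ∀ ω, qhat ω = orderStat (List.ofFn (fun i : Fin n => e i.castSucc ω)) k) :
    ℙ {ω | qhat ω < e (Fin.last n) ω} ≤
      ((n + 1 - k : ℕ) : ℝ≥0∞) / ((n : ℝ≥0∞) + 1) := by
  classical
  -- the bad set in coordinate space
  set B : Set (Fin (n + 1) → ℝ) :=
    {x | k ≤ (Finset.univ.filter (fun i : Fin n => x i.castSucc < x (Fin.last n))).card} with hB
  have hBmeas : MeasurableSet B := by
    have hg : Measurable (fun x : Fin (n + 1) → ℝ =>
        (Finset.univ.filter (fun i : Fin n => x i.castSucc < x (Fin.last n))).card) := by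
      simp only [Finset.card_filter]
      apply Finset.measurable_sum
      intro i _
      exact Measurable.ite
        (measurableSet_lt (measurable_pi_apply _) (measurable_pi_apply _))
        measurable_const measurable_const
    exact hg measurableSet_Ici
  -- the events A j
  set A : Fin (n + 1) → Set Ω := fun j =>
    {ω | k ≤ (Finset.univ.filter (fun i : Fin (n + 1) => e i ω < e j ω)).card} with hA
  -- the permuted vector maps
  have hvecmeas : ∀ σ : Equiv.Perm (Fin (n + 1)),
      Measurable (fun ω => fun i => e (σ i) ω) := fun σ =>
    measurable_pi_lambda _ (fun i => hmeas (σ i))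
  -- A j is the preimage of B under the swapped vector map
  have hApre : ∀ j : Fin (n + 1),
      A j = (fun ω => fun i => e (Equiv.swap (Fin.last n) j i) ω) ⁻¹' B := by
    intro j
    ext ω
    simp only [hA, hB, Set.mem_setOf_eq, Set.mem_preimage]
    have : (Finset.univ.filter (fun i : Fin n =>
        e (Equiv.swap (Fin.last n) j i.castSucc) ω < e (Equiv.swap (Fin.last n) j (Fin.last n)) ω)).card
        = (Finset.univ.filter (fun i : Fin (n + 1) => e i ω < e j ω)).card := by
      rw [Equiv.swap_apply_left]
      exact card_filter_swap j (fun i => e i ω < e j ω) (lt_irrefl _)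
    rw [this]
  have hAmeas : ∀ j, MeasurableSet (A j) := by
    intro j
    rw [hApre j]
    exact hBmeas.preimage (hvecmeas _)
  -- all events have the same probability
  have hAprob : ∀ j : Fin (n + 1), ℙ (A j) = (Measure.map (fun ω => fun i => e i ω) ℙ) B := by
    intro j
    rw [hApre j, ← Measure.map_apply (hvecmeas _) hBmeas, hexch]
  -- the target event equals A (last)
  have htarget : {ω | qhat ω < e (Fin.last n) ω} = A (Fin.last n) := by
    ext ω
    simp only [Set.mem_setOf_eq, hA]
    rw [hq ω, orderStat_lt_iff _ k hk1 (by simp [hkn]),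
      countP_ofFn' (fun i : Fin n => e i.castSucc ω) (fun a => a < e (Fin.last n) ω)]
    have hcs := card_filter_swap (Fin.last n)
      (fun i => e i ω < e (Fin.last n) ω) (lt_irrefl _)
    simp only [Equiv.swap_self, Equiv.refl_apply] at hcs
    rw [hcs]
  -- pointwise bound on the sum of indicators
  have hpt : ∀ ω, ∑ j : Fin (n + 1), (A j).indicator (fun _ => (1 : ℝ≥0∞)) ω
      ≤ ((n + 1 - k : ℕ) : ℝ≥0∞) := by
    intro ω
    have h1 : ∑ j : Fin (n + 1), (A j).indicator (fun _ => (1 : ℝ≥0∞)) ω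
        = ((Finset.univ.filter (fun j => ω ∈ A j)).card : ℝ≥0∞) := by
      rw [Finset.card_filter]
      push_cast
      simp [Set.indicator_apply]
    rw [h1]
    have h2 := card_rank_ge (m := n + 1) (k := k) (fun i => e i ω)
    have h3 : (Finset.univ.filter (fun j => ω ∈ A j)).card ≤ n + 1 - k := by
      convert h2 using 2
      ext j; simp [hA]
    exact_mod_cast h3
  -- summing the probabilities
  have hsum : (↑(n + 1) : ℝ≥0∞) * (Measure.map (fun ω => fun i => e i ω) ℙ) B
      ≤ ((n + 1 - k : ℕ) : ℝ≥0∞) := by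
    have h1 : ∑ j : Fin (n + 1), ℙ (A j)
        = (↑(n + 1) : ℝ≥0∞) * (Measure.map (fun ω => fun i => e i ω) ℙ) B := by
      simp only [hAprob]
      simp [Finset.card_univ, mul_comm]
    rw [← h1]
    calc ∑ j : Fin (n + 1), ℙ (A j)
        = ∑ j : Fin (n + 1), ∫⁻ ω, (A j).indicator (fun _ => (1 : ℝ≥0∞)) ω ∂ℙ := by
          refine Finset.sum_congr rfl fun j _ => ?_
          exact (lintegral_indicator_one (hAmeas j)).symm
      _ = ∫⁻ ω, ∑ j : Fin (n + 1), (A j).indicator (fun _ => (1 : ℝ≥0∞)) ω ∂ℙ :=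
          (lintegral_finset_sum _ fun j _ =>
            (measurable_const.indicator (hAmeas j))).symm
      _ ≤ ∫⁻ _, ((n + 1 - k : ℕ) : ℝ≥0∞) ∂ℙ := lintegral_mono hpt
      _ = ((n + 1 - k : ℕ) : ℝ≥0∞) := by simp
  rw [htarget, hAprob (Fin.last n)]
  rw [ENNReal.le_div_iff_mul_le (Or.inl (by simp)) (Or.inl (by finiteness))]
  rw [mul_comm]
  convert hsum using 2
  push_cast
  ring
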